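/- Let G be an additive abelian group with cyclic torsion subgroup, let m be an even positive integer, and let A₁,…,A_m be subsets of G each of cardinality n ≥ 1 such that every element of A_m has odd (finite) order. Then the elements of each A_i can be listed as a_{i1},…,a_{in} so that the sums ∑_{i=1}^m a_{ij} (1 ≤ j ≤ n) are pairwise distinct. -/

import Mathlib

open Finset Equiv Matrix

private lemma sun_identity {R : Type*} [CommRing R] {L n : ℕ} (hl : Odd L)
    (a : Fin L → Fin n → R) (c : Fin n → R) :
    ∑ π : Fin L → Equiv.Perm (Fin n),
      (∏ i, ((Equiv.Perm.sign (π i) : ℤ) : R)) *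
        (Matrix.vandermonde (fun j => c j * ∏ i, a i (π i j))).det
      = (Matrix.of fun x j : Fin n => c x ^ (j : ℕ)).permanent *
        ∏ i, (Matrix.vandermonde (a i)).det := by
  classical
  set ε : Equiv.Perm (Fin n) → R := fun σ => ((Equiv.Perm.sign σ : ℤ) : R) with hε
  have hε2 : ∀ σ, ε σ * ε σ = 1 := by
    intro σ
    rcases Int.units_eq_one_or (Equiv.Perm.sign σ) with h | h <;> simp [hε, h]
  have hdet : ∀ y : Fin n → R, (Matrix.vandermonde y).det
      = ∑ σ : Equiv.Perm (Fin n), ε σ * ∏ j, y (σ j) ^ (j : ℕ) := by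
    intro y
    rw [Matrix.det_apply]
    refine Finset.sum_congr rfl fun σ _ => ?_
    simp [Matrix.vandermonde, Units.smul_def, zsmul_eq_mul, hε]
  calc
    ∑ π : Fin L → Equiv.Perm (Fin n),
      (∏ i, ε (π i)) *
        (Matrix.vandermonde (fun j => c j * ∏ i, a i (π i j))).det
      = ∑ π : Fin L → Equiv.Perm (Fin n), ∑ σ : Equiv.Perm (Fin n),
          (ε σ * ∏ j, c (σ j) ^ (j : ℕ)) * ∏ i, (ε (π i) * ∏ j, a i (π i (σ j)) ^ (j : ℕ)) := by
        refine Finset.sum_congr rfl fun π _ => ?_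
        rw [hdet, Finset.mul_sum]
        refine Finset.sum_congr rfl fun σ _ => ?_
        simp_rw [mul_pow, Finset.prod_mul_distrib, ← Finset.prod_pow]
        rw [Finset.prod_comm (s := Finset.univ) (t := Finset.univ)
          (f := fun (j : Fin n) (i : Fin L) => a i (π i (σ j)) ^ (j : ℕ))]
        ring
    _ = ∑ σ : Equiv.Perm (Fin n),
          (ε σ * ∏ j, c (σ j) ^ (j : ℕ)) *
            ∏ i, ∑ τ : Equiv.Perm (Fin n), (ε τ * ∏ j, a i (τ (σ j)) ^ (j : ℕ)) := by
        rw [Finset.sum_comm]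
        refine Finset.sum_congr rfl fun σ _ => ?_
        rw [← Finset.mul_sum]
        congr 1
        rw [Finset.prod_univ_sum]
        rw [Fintype.piFinset_univ]
    _ = ∑ σ : Equiv.Perm (Fin n),
          (ε σ * ∏ j, c (σ j) ^ (j : ℕ)) *
            ∏ i : Fin L, (ε σ * (Matrix.vandermonde (a i)).det) := by
        refine Finset.sum_congr rfl fun σ _ => ?_
        congr 1
        refine Finset.prod_congr rfl fun i _ => ?_
        rw [hdet (a i), Finset.mul_sum]
        symm
        refine Fintype.sum_bijective (fun ρ => ρ * σ⁻¹)
          (Group.mulRight_bijective σ⁻¹) _ _ fun ρ => ?_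
        have h1 : ε (ρ * σ⁻¹) = ε ρ * ε σ := by
          simp only [hε, _root_.map_mul, Equiv.Perm.sign_inv]
          push_cast
          ring
        have h2 : ∀ j : Fin n, (ρ * σ⁻¹) (σ j) = ρ j := by
          intro j
          rw [Equiv.Perm.mul_apply]
          exact congrArg ρ (Equiv.symm_apply_apply σ j)
        simp_rw [h1, h2]
        ring
    _ = ∑ σ : Equiv.Perm (Fin n),
          (∏ j, c (σ j) ^ (j : ℕ)) * ∏ i, (Matrix.vandermonde (a i)).det := by
        refine Finset.sum_congr rfl fun σ _ => ?_
        rw [Finset.prod_mul_distrib, Finset.prod_const, Finset.card_univ, Fintype.card_fin]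
        obtain ⟨t, ht⟩ := hl
        have hpow : ε σ * ε σ ^ L = 1 := by
          have h2 : (ε σ * ε σ) ^ (t + 1) = 1 := by rw [hε2]; exact one_pow _
          calc ε σ * ε σ ^ L = (ε σ * ε σ) ^ (t + 1) := by rw [ht]; ring
            _ = 1 := h2
        calc (ε σ * ∏ j, c (σ j) ^ (j : ℕ)) * (ε σ ^ L * ∏ i, (Matrix.vandermonde (a i)).det)
            = (ε σ * ε σ ^ L) * ((∏ j, c (σ j) ^ (j : ℕ)) * ∏ i, (Matrix.vandermonde (a i)).det) := by
              ring
          _ = (∏ j, c (σ j) ^ (j : ℕ)) * ∏ i, (Matrix.vandermonde (a i)).det := by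
              rw [hpow, one_mul]
    _ = (Matrix.of fun x j : Fin n => c x ^ (j : ℕ)).permanent *
        ∏ i, (Matrix.vandermonde (a i)).det := by
        rw [← Finset.sum_mul]
        congr 1


open Finset Equiv Matrix Polynomial

private lemma sun_permanent_ne_zero {K : Type*} [Field K] [CharZero K] {n : ℕ}
    {b : Fin n → K} (hbinj : Function.Injective b) {d : ℕ} (hd : Odd d) (hd0 : 0 < d)
    (hb : ∀ j, b j ^ d = 1) :
    (Matrix.of fun x j : Fin n => b x ^ (j : ℕ)).permanent ≠ 0 := by
  classical
  have hbne : ∀ j, b j ≠ 0 := by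
    intro j h
    have := hb j
    rw [h, zero_pow hd0.ne'] at this
    exact zero_ne_one this
  set dp : ℕ+ := ⟨d, hd0⟩ with hdp
  set u : Fin n → Kˣ := fun j => Units.mk0 (b j) (hbne j) with hu
  have humem : ∀ j, u j ∈ rootsOfUnity dp K := by
    intro j
    rw [mem_rootsOfUnity]
    ext
    push_cast [hu]
    exact hb j
  obtain ⟨g, hg⟩ := IsCyclic.exists_generator (α := (rootsOfUnity dp K))
  set gh : K := ((g : Kˣ) : K) with hgh
  have hgd : gh ^ d = 1 := by
    have h1 := g.2
    rw [mem_rootsOfUnity] at h1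
    have h2 : (g : Kˣ) ^ d = 1 := h1
    calc gh ^ d = (((g : Kˣ) ^ d : Kˣ) : K) := by push_cast; rfl
      _ = 1 := by rw [h2]; rfl
  set D2 : ℕ := orderOf gh with hD2
  have hD2pos : 0 < D2 := by
    refine IsOfFinOrder.orderOf_pos ?_
    exact isOfFinOrder_iff_pow_eq_one.2 ⟨d, hd0, hgd⟩
  have hD2dvd : D2 ∣ d := orderOf_dvd_of_pow_eq_one hgd
  have hD2odd : Odd D2 := by
    rcases Nat.even_or_odd D2 with h2 | h2
    · exact absurd (even_iff_two_dvd.mpr ((even_iff_two_dvd.mp h2).trans hD2dvd))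
        (Nat.not_even_iff_odd.mpr hd)
    · exact h2
  have hprim : IsPrimitiveRoot gh D2 := IsPrimitiveRoot.orderOf gh
  -- discrete logarithms
  have hdl : ∀ j, ∃ s : ℕ, s < D2 ∧ gh ^ s = b j := by
    intro j
    have hmem := hg ⟨u j, humem j⟩
    rw [← mem_powers_iff_mem_zpowers] at hmem
    obtain ⟨k, hk⟩ := hmem
    refine ⟨k % D2, Nat.mod_lt _ hD2pos, ?_⟩
    rw [hD2, pow_mod_orderOf, hgh]
    have : ((g : Kˣ) ^ k : Kˣ) = u j := by
      have := congrArg (Subtype.val) hk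
      push_cast at this
      exact_mod_cast this
    calc ((g : Kˣ) : K) ^ k = (((g : Kˣ) ^ k : Kˣ) : K) := by push_cast; rfl
      _ = b j := by rw [this]; rfl
  choose t ht1 ht2 using hdl
  have htinj : Function.Injective t := by
    intro x y h
    exact hbinj (by rw [← ht2 x, ← ht2 y, h])
  set P : Polynomial ℤ := ∑ σ : Equiv.Perm (Fin n), ∏ j : Fin n,
    (Polynomial.X : Polynomial ℤ) ^ (t (σ j) * (j : ℕ)) with hP
  intro h0
  have haeval : Polynomial.aeval gh P = 0 := by
    rw [hP]
    push_cast [map_sum, map_prod, map_pow, Polynomial.aeval_X]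
    calc ∑ σ : Equiv.Perm (Fin n), ∏ j : Fin n, gh ^ (t (σ j) * (j : ℕ))
        = ∑ σ : Equiv.Perm (Fin n), ∏ j : Fin n, b (σ j) ^ (j : ℕ) := by
          refine Finset.sum_congr rfl fun σ _ => Finset.prod_congr rfl fun j _ => ?_
          rw [pow_mul, ht2]
      _ = 0 := h0
  have hdvd : Polynomial.cyclotomic D2 ℤ ∣ P := by
    rw [Polynomial.cyclotomic_eq_minpoly hprim hD2pos]
    exact minpoly.isIntegrallyClosed_dvd (hprim.isIntegral hD2pos) haeval
  obtain ⟨Q, hQ⟩ := hdvd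
  -- the characteristic two field
  haveI : NeZero ((D2 : ℕ) : ZMod 2) := by
    refine ⟨fun h => ?_⟩
    rw [ZMod.natCast_eq_zero_iff] at h
    rw [← Nat.not_even_iff_odd] at hD2odd
    exact hD2odd (even_iff_two_dvd.2 h)
  haveI : NeZero ((((⟨D2, hD2pos⟩ : ℕ+) : ℕ)) : ZMod 2) := ‹NeZero ((D2 : ℕ) : ZMod 2)›
  haveI : NeZero D2 := ⟨hD2pos.ne'⟩
  haveI : IsCyclotomicExtension {D2} (ZMod 2)
      (CyclotomicField D2 (ZMod 2)) :=
    CyclotomicField.isCyclotomicExtension D2 (ZMod 2)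
  set w : CyclotomicField D2 (ZMod 2) :=
    IsCyclotomicExtension.zeta D2 (ZMod 2) (CyclotomicField D2 (ZMod 2)) with hw
  have hwprim : IsPrimitiveRoot w D2 :=
    IsCyclotomicExtension.zeta_spec D2 (ZMod 2) (CyclotomicField D2 (ZMod 2))
  haveI : CharP (CyclotomicField D2 (ZMod 2)) 2 :=
    charP_of_injective_algebraMap
      (algebraMap (ZMod 2) (CyclotomicField D2 (ZMod 2))).injective 2
  set v : Fin n → CyclotomicField D2 (ZMod 2) := fun x => w ^ t x with hv
  have hvinj : Function.Injective v := by
    intro x y h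
    exact htinj (hwprim.pow_inj (ht1 x) (ht1 y) h)
  -- evaluate P at w : it is zero since cyclotomic D2 divides P
  have hePzero : Polynomial.aeval w P = 0 := by
    rw [hQ, _root_.map_mul]
    have : Polynomial.aeval w (Polynomial.cyclotomic D2 ℤ) = 0 := by
      rw [Polynomial.aeval_def, Polynomial.eval₂_eq_eval_map]
      have hmap : (Polynomial.cyclotomic D2 ℤ).map (algebraMap ℤ (CyclotomicField D2 (ZMod 2))) = Polynomial.cyclotomic D2 (CyclotomicField D2 (ZMod 2)) := by
        have := Polynomial.map_cyclotomic_int D2 (CyclotomicField D2 (ZMod 2))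
        exact Polynomial.map_cyclotomic D2 _
      rw [hmap]
      exact (hwprim.isRoot_cyclotomic hD2pos)
    rw [this, zero_mul]
  -- but P evaluates to the vandermonde determinant of v, which is nonzero
  have hePdet : Polynomial.aeval w P = (Matrix.vandermonde v).det := by
    rw [hP]
    push_cast [map_sum, map_prod, map_pow, Polynomial.aeval_X]
    rw [Matrix.det_apply]
    refine Finset.sum_congr rfl fun σ _ => ?_
    have hsmul : ∀ z : CyclotomicField D2 (ZMod 2), Equiv.Perm.sign σ • z = z := by
      intro z
      rcases Int.units_eq_one_or (Equiv.Perm.sign σ) with h | h <;> rw [h]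
      · rw [one_smul]
      · have : (-1 : ℤˣ) • z = -z := by
          rw [Units.smul_def]
          push_cast
          rw [neg_smul, one_smul]
        rw [this, CharTwo.neg_eq]
    rw [hsmul]
    refine Finset.prod_congr rfl fun j _ => ?_
    rw [Matrix.vandermonde]
    simp [hv, pow_mul]
  have hdetne : (Matrix.vandermonde v).det ≠ 0 := by
    rw [Matrix.det_vandermonde]
    refine Finset.prod_ne_zero_iff.2 fun i _ => Finset.prod_ne_zero_iff.2 fun j hj => ?_
    rw [Finset.mem_Ioi] at hj
    exact sub_ne_zero.2 fun h => absurd (hvinj h) (Fin.ne_of_gt hj)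
  rw [hePdet] at hePzero
  exact hdetne hePzero

/-- Corollary 1.2: m even, all elements of the last set of odd order. -/

theorem stmt7 {G : Type*} [AddCommGroup G]
    (htor : IsAddCyclic (AddCommGroup.torsion G))
    (m n : ℕ) (hm : Even m) (hmpos : 0 < m) (hn : 0 < n)
    (A : Fin m → Finset G) (hcard : ∀ i, (A i).card = n)
    (hodd : ∀ x ∈ A ⟨m - 1, by omega⟩, Odd (addOrderOf x)) :
    ∃ a : Fin m → Fin n → G,
      (∀ i, Function.Injective (a i) ∧ ∀ j, a i j ∈ A i) ∧
      Function.Injective fun j : Fin n => ∑ i, a i j := by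
  classical
  obtain ⟨L, rfl⟩ : ∃ L, m = L + 1 := ⟨m - 1, (Nat.succ_pred_eq_of_pos hmpos).symm⟩
  have hLodd : Odd L := Nat.not_even_iff_odd.1 (Nat.even_add_one.mp hm)
  have hlast : (⟨L + 1 - 1, by omega⟩ : Fin (L + 1)) = Fin.last L := rfl
  rw [hlast] at hodd
  -- enumerations of the sets
  have hcards : ∀ i, Fintype.card (A i) = n := fun i => by
    rw [Fintype.card_coe, hcard]
  set E : Fin (L + 1) → Fin n → G :=
    fun i j => ((Fintype.equivFinOfCardEq (hcards i)).symm j : G) with hE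
  have hEinj : ∀ i, Function.Injective (E i) := by
    intro i a b hab
    exact (Fintype.equivFinOfCardEq (hcards i)).symm.injective (Subtype.ext hab)
  have hEmem : ∀ i j, E i j ∈ A i := fun i j =>
    ((Fintype.equivFinOfCardEq (hcards i)).symm j).2
  -- the finitely generated subgroup
  set S : Set G := ⋃ i : Fin (L + 1), (A i : Set G) with hS
  have hSfin : S.Finite := Set.finite_iUnion fun i => (A i).finite_toSet
  set H : AddSubgroup G := AddSubgroup.closure S with hH
  haveI : Finite ↥S := hSfin.to_subtype
  haveI : AddGroup.FG H := AddGroup.closure_finite_fg S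
  obtain ⟨k, ι, hι, p, hp, ee, ⟨eH⟩⟩ := AddCommGroup.equiv_free_prod_directSum_zmod ↥H
  haveI := hι
  haveI : DecidableEq ι := Classical.decEq ι
  haveI hqne : ∀ i : ι, NeZero (p i ^ ee i) := fun i => ⟨pow_ne_zero _ (hp i).pos.ne'⟩
  set D := DirectSum ι fun i => ZMod (p i ^ ee i) with hD
  haveI : Fintype D := DFinsupp.fintype
  -- D is cyclic, being isomorphic to a subgroup of the cyclic torsion subgroup
  set fD : D →+ ↥H :=
    (eH.symm.toAddMonoidHom).comp (AddMonoidHom.inr (Fin k →₀ ℤ) D) with hfD'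
  have hfDinj : Function.Injective fD := by
    intro a b hab
    have h1 : eH.symm (0, a) = eH.symm (0, b) := hab
    have := eH.symm.injective h1
    exact congrArg Prod.snd this
  set fDG : D →+ G := H.subtype.comp fD with hfDG
  have hfDGinj : Function.Injective fDG := Subtype.val_injective.comp hfDinj
  have hfDGtor : ∀ d : D, fDG d ∈ AddCommGroup.torsion G := by
    intro d
    exact fDG.isOfFinAddOrder (isOfFinAddOrder_of_finite d)
  set fDT : D →+ ↥(AddCommGroup.torsion G) :=
    AddMonoidHom.codRestrict fDG (AddCommGroup.torsion G) hfDGtor with hfDT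
  have hfDTinj : Function.Injective fDT := by
    intro a b hab
    have h5 := congrArg Subtype.val hab
    exact hfDGinj h5
  haveI hcycD : IsAddCyclic D := by
    haveI := htor
    haveI : IsAddCyclic ↥fDT.range := inferInstance
    exact isAddCyclic_of_surjective (AddMonoidHom.ofInjective hfDTinj).symm
      (AddMonoidHom.ofInjective hfDTinj).symm.surjective
  set N : ℕ := Nat.card D with hN
  have hNpos : 0 < N := Nat.card_pos
  haveI : NeZero N := ⟨hNpos.ne'⟩
  set eD : ZMod N ≃+ D := zmodAddCyclicAddEquiv hcycD with heD
  set e2 : ↥H ≃+ (Fin k →₀ ℤ) × ZMod N :=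
    eH.trans (AddEquiv.prodCongr (AddEquiv.refl _) eD.symm) with he2
  -- the cyclotomic field
  haveI : NeZero ((((⟨N, hNpos⟩ : ℕ+) : ℕ)) : ℚ) := ⟨Nat.cast_ne_zero.2 hNpos.ne'⟩
  haveI : IsCyclotomicExtension {N} ℚ (CyclotomicField N ℚ) :=
    CyclotomicField.isCyclotomicExtension N ℚ
  set K := CyclotomicField N ℚ with hK
  set ζ : K := IsCyclotomicExtension.zeta N ℚ K with hζdef
  have hζ : IsPrimitiveRoot ζ N := IsCyclotomicExtension.zeta_spec N ℚ K
  haveI : CharZero K := charZero_of_injective_algebraMap (algebraMap ℚ K).injective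
  have horderζ : orderOf ζ = N := hζ.eq_orderOf.symm
  have hζne : ζ ≠ 0 := hζ.ne_zero hNpos.ne'
  -- the big ring
  set R := AddMonoidAlgebra K (Fin k →₀ ℤ) with hR
  set φ : ↥H → R := fun h => AddMonoidAlgebra.single (e2 h).1 (ζ ^ ((e2 h).2.val)) with hφ
  have hφmul : ∀ x y : ↥H, φ (x + y) = φ x * φ y := by
    intro x y
    rw [hφ]
    simp only
    rw [AddMonoidAlgebra.single_mul_single]
    have h1 : (e2 (x + y)).1 = (e2 x).1 + (e2 y).1 := by rw [map_add]; rfl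
    have h2 : ζ ^ ((e2 (x + y)).2.val) = ζ ^ ((e2 x).2.val) * ζ ^ ((e2 y).2.val) := by
      rw [← pow_add]
      have h3 : (e2 (x + y)).2 = (e2 x).2 + (e2 y).2 := by rw [map_add]; rfl
      rw [h3, ZMod.val_add]
      have h4 := pow_mod_orderOf ζ ((e2 x).2.val + (e2 y).2.val)
      rw [horderζ] at h4
      exact h4
    rw [h1, h2]
  have hφ0 : φ 0 = 1 := by
    rw [hφ]
    simp only [map_zero]
    rw [show ((0 : (Fin k →₀ ℤ) × ZMod N)).1 = 0 from rfl,
      show ((0 : (Fin k →₀ ℤ) × ZMod N)).2 = 0 from rfl, ZMod.val_zero, pow_zero]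
    exact AddMonoidAlgebra.one_def.symm
  have hφne : ∀ x, φ x ≠ 0 := by
    intro x h
    rw [hφ] at h
    exact pow_ne_zero _ hζne (AddMonoidAlgebra.single_eq_zero.1 h)
  have hφinj : Function.Injective φ := by
    intro x y h
    rw [hφ] at h
    simp only at h
    rcases AddMonoidAlgebra.single_inj.1 h with ⟨h1, h2⟩ | ⟨h1, _⟩
    · apply e2.injective
      refine Prod.ext h1 ?_
      have := hζ.pow_inj (ZMod.val_lt _) (ZMod.val_lt _) h2
      have h4 : (((e2 x).2.val : ℕ) : ZMod N) = (((e2 y).2.val : ℕ) : ZMod N) := by rw [this]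
      rwa [ZMod.natCast_val, ZMod.natCast_val, ZMod.cast_id, ZMod.cast_id] at h4
    · exact absurd h1 (pow_ne_zero _ hζne)
  have hφsum : ∀ (s : Finset (Fin (L + 1))) (f : Fin (L + 1) → ↥H),
      φ (∑ i ∈ s, f i) = ∏ i ∈ s, φ (f i) := by
    intro s f
    induction s using Finset.cons_induction with
    | empty => simpa using hφ0
    | cons a s ha ih => rw [Finset.sum_cons, Finset.prod_cons, hφmul, ih]
  have hφnsmul : ∀ (o : ℕ) (x : ↥H), φ (o • x) = φ x ^ o := by
    intro o x
    induction o with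
    | zero => simpa using hφ0
    | succ o ih => rw [succ_nsmul, pow_succ, hφmul, ih]
  -- lifts of the enumerated elements
  have hmemH : ∀ i j, E i j ∈ H := fun i j =>
    AddSubgroup.subset_closure (Set.mem_iUnion.2 ⟨i, hEmem i j⟩)
  set w : Fin (L + 1) → Fin n → ↥H := fun i j => ⟨E i j, hmemH i j⟩ with hw
  set x : Fin (L + 1) → Fin n → R := fun i j => φ (w i j) with hx
  have hwinj : ∀ i, Function.Injective (w i) := by
    intro i a b hab
    have h5 := congrArg Subtype.val hab
    exact hEinj i h5
  have hxinj : ∀ i, Function.Injective (x i) := fun i => hφinj.comp (hwinj i)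
  -- the last set consists of torsion elements of odd order
  have hordodd : ∀ j, Odd (addOrderOf (E (Fin.last L) j)) := fun j => hodd _ (hEmem _ j)
  have hordpos : ∀ j, 0 < addOrderOf (E (Fin.last L) j) := by
    intro j
    rcases Nat.eq_zero_or_pos (addOrderOf (E (Fin.last L) j)) with h | h
    · exact absurd (h ▸ hordodd j) (by decide)
    · exact h
  have hworder : ∀ j, addOrderOf (E (Fin.last L) j) • w (Fin.last L) j = 0 := by
    intro j
    apply Subtype.ext
    push_cast
    exact addOrderOf_nsmul_eq_zero (E (Fin.last L) j)
  have hfree : ∀ j, (e2 (w (Fin.last L) j)).1 = 0 := by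
    intro j
    have h1 : addOrderOf (E (Fin.last L) j) • e2 (w (Fin.last L) j) = 0 := by
      rw [← map_nsmul, hworder, map_zero]
    have h2 : addOrderOf (E (Fin.last L) j) • (e2 (w (Fin.last L) j)).1 = 0 :=
      congrArg Prod.fst h1
    have h3 : (addOrderOf (E (Fin.last L) j) : ℤ) • (e2 (w (Fin.last L) j)).1 = 0 := by
      rw [natCast_zsmul]; exact h2
    rcases smul_eq_zero.1 h3 with h4 | h4
    · exact absurd (Int.natCast_eq_zero.1 h4) (hordpos j).ne'
    · exact h4
  set cK : Fin n → K := fun j => ζ ^ ((e2 (w (Fin.last L) j)).2.val) with hcK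
  set ψ : K →+* R := AddMonoidAlgebra.singleZeroRingHom with hψ
  have hψinj : Function.Injective ψ := fun a b hab => AddMonoidAlgebra.single_right_injective (m := (0 : Fin k →₀ ℤ)) hab
  have hc : ∀ j, x (Fin.last L) j = ψ (cK j) := by
    intro j
    rw [hx, hφ]
    simp only
    rw [hfree j]
    rfl
  have hcinj : Function.Injective cK := by
    intro a b hab
    apply hxinj (Fin.last L)
    rw [hc, hc, hab]
  have hcKpow : ∀ j, cK j ^ (addOrderOf (E (Fin.last L) j)) = 1 := by
    intro j
    have h1 : φ (addOrderOf (E (Fin.last L) j) • w (Fin.last L) j) = 1 := by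
      rw [hworder, hφ0]
    rw [hφnsmul] at h1
    have h2 : x (Fin.last L) j ^ (addOrderOf (E (Fin.last L) j)) = 1 := h1
    rw [hc] at h2
    rw [← map_pow] at h2
    have h3 : ψ (cK j ^ (addOrderOf (E (Fin.last L) j))) = ψ 1 := by rw [h2, _root_.map_one]
    exact hψinj h3
  set d : ℕ := ∏ j : Fin n, addOrderOf (E (Fin.last L) j) with hd
  have hdodd : Odd d :=
    Finset.prod_induction _ Odd (fun a b ha hb => ha.mul hb) odd_one
      (fun j _ => hordodd j)
  have hdpos : 0 < d := Finset.prod_pos fun j _ => hordpos j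
  have hcKd : ∀ j, cK j ^ d = 1 := by
    intro j
    obtain ⟨c', hc'⟩ := Finset.dvd_prod_of_mem
      (fun j => addOrderOf (E (Fin.last L) j)) (Finset.mem_univ j)
    rw [hd, hc', pow_mul, hcKpow, one_pow]
  -- the permanent is nonzero
  have hperm : (Matrix.of fun y j : Fin n => cK y ^ (j : ℕ)).permanent ≠ 0 :=
    sun_permanent_ne_zero hcinj hdodd hdpos hcKd
  have hpermmap : (Matrix.of fun y j : Fin n => ψ (cK y) ^ (j : ℕ)).permanent
      = ψ ((Matrix.of fun y j : Fin n => cK y ^ (j : ℕ)).permanent) := by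
    rw [Matrix.permanent, Matrix.permanent, map_sum]
    refine Finset.sum_congr rfl fun σ _ => ?_
    rw [map_prod]
    refine Finset.prod_congr rfl fun j _ => ?_
    exact (map_pow ψ (cK (σ j)) ((j : Fin n) : ℕ)).symm
  have hpermR : (Matrix.of fun y j : Fin n => ψ (cK y) ^ (j : ℕ)).permanent ≠ 0 := by
    rw [hpermmap]
    intro h0
    exact hperm (hψinj (by rw [h0, map_zero]))
  -- apply the identity
  have hdets : ∀ i : Fin L, (Matrix.vandermonde (fun j => x i.castSucc j)).det ≠ 0 := by
    intro i
    rw [Matrix.det_vandermonde]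
    refine Finset.prod_ne_zero_iff.2 fun a _ => Finset.prod_ne_zero_iff.2 fun b hb => ?_
    rw [Finset.mem_Ioi] at hb
    exact sub_ne_zero.2 fun hcon => absurd ((hxinj i.castSucc) hcon) (Fin.ne_of_gt hb)
  have hRHS : (Matrix.of fun y j : Fin n => ψ (cK y) ^ (j : ℕ)).permanent *
      ∏ i : Fin L, (Matrix.vandermonde (fun j => x i.castSucc j)).det ≠ 0 :=
    mul_ne_zero hpermR (Finset.prod_ne_zero_iff.2 fun i _ => hdets i)
  rw [← sun_identity hLodd (fun i j => x i.castSucc j) (fun j => ψ (cK j))] at hRHS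
  obtain ⟨π, -, hπ⟩ := Finset.exists_ne_zero_of_sum_ne_zero hRHS
  have hdet : (Matrix.vandermonde
      (fun j => ψ (cK j) * ∏ i : Fin L, x i.castSucc (π i j))).det ≠ 0 :=
    right_ne_zero_of_mul hπ
  set y : Fin n → R := fun j => ψ (cK j) * ∏ i : Fin L, x i.castSucc (π i j) with hy
  have hyinj : Function.Injective y := by
    intro a b hab
    by_contra hne
    rw [Matrix.det_vandermonde] at hdet
    have hfac := Finset.prod_ne_zero_iff.1 hdet
    rcases lt_or_gt_of_ne hne with hlt | hlt
    · exact (Finset.prod_ne_zero_iff.1 (hfac a (Finset.mem_univ a)) b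
        (Finset.mem_Ioi.2 hlt)) (by rw [hab, sub_self])
    · exact (Finset.prod_ne_zero_iff.1 (hfac b (Finset.mem_univ b)) a
        (Finset.mem_Ioi.2 hlt)) (by rw [hab, sub_self])
  -- construct the final orderings
  set πf : (i : Fin (L + 1)) → Equiv.Perm (Fin n) :=
    Fin.lastCases 1 π with hπf
  refine ⟨fun i j => E i (πf i j), fun i => ⟨(hEinj i).comp (πf i).injective,
    fun j => hEmem i _⟩, ?_⟩
  intro j1 j2 hsum
  simp only at hsum
  have hsumH : (∑ i, w i (πf i j1)) = ∑ i, w i (πf i j2) := by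
    apply Subtype.ext
    rw [AddSubmonoidClass.coe_finset_sum, AddSubmonoidClass.coe_finset_sum]
    exact hsum
  have hprod : ∀ j : Fin n, ∏ i, x i (πf i j) = y j := by
    intro j
    rw [Fin.prod_univ_castSucc]
    have h1 : ∀ i : Fin L, πf i.castSucc = π i := fun i => by
      simp only [hπf, Fin.lastCases_castSucc]
    have h2 : πf (Fin.last L) = 1 := by simp only [hπf, Fin.lastCases_last]
    rw [h2]
    have h3 : x (Fin.last L) ((1 : Equiv.Perm (Fin n)) j) = ψ (cK j) := by
      rw [Equiv.Perm.one_apply, hc]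
    rw [h3, hy]
    rw [mul_comm]
    congr 1
    exact Finset.prod_congr rfl fun i _ => by rw [h1]
  have hyy : y j1 = y j2 := by
    rw [← hprod, ← hprod, ← hφsum, ← hφsum, hsumH]
  exact hyinj hyy
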